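/- In the static-cylinder Fefferman–Graham frame with h(w, t) = 1 − √w · √(2c²/((c+1) cos t)), the regulated volume of the extremal slice anchored at boundary time t₀ ∈ (−π/2, π/2) is vol[Σ_{t₀}] = vol[S^{d−1}][ε^{−d+1}/(d−1) − ((d−1)/(d−3/2)) ε^{−d+3/2} √(2c²/((c+1) cos t₀)) + O(ε^{−d+2})], and consequently d vol[Σ_t]/dt = −ε^{−(d−3/2)} ((d−1)/(d−3/2)) √(c²/(2(c+1))) · sin t/(cos t)^{3/2} + O(ε^{−d+2}), which is negative for 0 < t < π/2. -/

import Mathlib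

open Real Filter Topology Asymptotics MeasureTheory intervalIntegral

private lemma scc_int_eval (d : ℕ) (hd : 2 ≤ d) (a : ℝ) {ε : ℝ} (hε : 0 < ε) (hε1 : ε ≤ 1) :
    (∫ w in ε..1, (1 - Real.sqrt w * a) ^ (d - 1) * w ^ (-(d : ℝ)))
      = ∑ k ∈ Finset.range d, ((d-1).choose k : ℝ) * (-a)^k *
          ((1 - ε ^ ((k:ℝ)/2 - (d:ℝ) + 1)) / ((k:ℝ)/2 - (d:ℝ) + 1)) := by
  have h0 : (0:ℝ) ∉ Set.uIcc ε 1 := by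
    rw [Set.uIcc_of_le hε1]
    rintro ⟨h1, -⟩; linarith
  have hcong : Set.EqOn (fun w => (1 - Real.sqrt w * a) ^ (d - 1) * w ^ (-(d : ℝ)))
      (fun w => ∑ k ∈ Finset.range d, ((d-1).choose k : ℝ) * (-a)^k * w ^ ((k:ℝ)/2 - (d:ℝ)))
      (Set.uIcc ε 1) := by
    intro w hw
    rw [Set.uIcc_of_le hε1] at hw
    have hw0 : 0 < w := lt_of_lt_of_le hε hw.1
    simp only
    have hsub : 1 - Real.sqrt w * a = (-(Real.sqrt w * a)) + 1 := by ring
    rw [hsub, add_pow, Nat.sub_add_cancel (le_trans one_le_two hd), Finset.sum_mul]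
    refine Finset.sum_congr rfl fun k hk => ?_
    have hsq : Real.sqrt w ^ k = w ^ ((k:ℝ)/2) := by
      rw [← Real.rpow_natCast (Real.sqrt w) k, Real.sqrt_eq_rpow, ← Real.rpow_mul hw0.le]
      congr 1; ring
    have : (-(Real.sqrt w * a)) ^ k = (-a)^k * w ^ ((k:ℝ)/2) := by
      rw [← hsq, ← mul_pow]; ring
    rw [this, show ((k:ℝ)/2 - (d:ℝ)) = (k:ℝ)/2 + -(d:ℝ) by ring, Real.rpow_add hw0]
    ring
  rw [intervalIntegral.integral_congr hcong]
  rw [intervalIntegral.integral_finset_sum]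
  · refine Finset.sum_congr rfl fun k hk => ?_
    rw [intervalIntegral.integral_const_mul]
    have hne : (k:ℝ)/2 - (d:ℝ) ≠ -1 := by
      simp only [Finset.mem_range] at hk
      have : (k:ℝ) < d := by exact_mod_cast hk
      intro h
      have : (k:ℝ) = 2*(d:ℝ) - 2 := by linarith
      have hd2 : (2:ℝ) ≤ d := by exact_mod_cast hd
      linarith
    rw [integral_rpow (Or.inr ⟨hne, h0⟩)]
    rw [Real.one_rpow]
  · intro k hk
    exact (intervalIntegrable_rpow (Or.inr h0)).const_mul _

private lemma scc_rpow_isBigO {β γ : ℝ} (h : γ ≤ β) :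
    (fun ε : ℝ => ε ^ β) =O[𝓝[>] (0:ℝ)] fun ε => ε ^ γ := by
  refine Asymptotics.IsBigO.of_bound 1 ?_
  filter_upwards [Ioc_mem_nhdsGT (zero_lt_one)] with ε hε
  rw [Real.norm_eq_abs, Real.norm_eq_abs, one_mul,
    abs_of_nonneg (Real.rpow_nonneg hε.1.le _), abs_of_nonneg (Real.rpow_nonneg hε.1.le _)]
  exact Real.rpow_le_rpow_of_exponent_ge hε.1 hε.2 h

private lemma scc_aux_O (d : ℕ) (hd : 2 ≤ d) (K volS : ℝ) (m : ℕ → ℝ) :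
    (fun ε : ℝ => volS * (K - ∑ k ∈ Finset.Ico 2 d, m k * ε ^ ((k:ℝ)/2 - (d:ℝ) + 1)))
      =O[𝓝[>] (0:ℝ)] fun ε => ε ^ (-(d:ℝ)+2) := by
  have hd2 : (2:ℝ) ≤ (d:ℝ) := by exact_mod_cast hd
  have hone : (fun _ : ℝ => (1:ℝ)) =O[𝓝[>] (0:ℝ)] fun ε => ε ^ (-(d:ℝ)+2) := by
    simpa [Real.rpow_zero] using scc_rpow_isBigO (show -(d:ℝ)+2 ≤ 0 by linarith)
  refine Asymptotics.IsBigO.const_mul_left ?_ volS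
  refine ((Asymptotics.isBigO_const_const K one_ne_zero _).trans hone).sub ?_
  refine Asymptotics.IsBigO.fun_sum fun k hk => ?_
  refine Asymptotics.IsBigO.const_mul_left ?_ _
  refine scc_rpow_isBigO ?_
  rw [Finset.mem_Ico] at hk
  have : (2:ℝ) ≤ (k:ℝ) := by exact_mod_cast hk.1
  linarith

private lemma scc_hasDerivAt_g (c : ℝ) (hc : 0 < c) (t₀ : ℝ) (hcos : 0 < Real.cos t₀) :
    HasDerivAt (fun t => Real.sqrt (2 * c ^ 2 / ((c + 1) * Real.cos t)))
      (Real.sqrt (c ^ 2 / (2 * (c + 1))) * Real.sin t₀ / Real.cos t₀ ^ ((3:ℝ)/2)) t₀ := by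
  have hp : (0:ℝ) < c + 1 := by linarith
  set s := Real.cos t₀ with hs
  have hden : (c+1) * s ≠ 0 := by positivity
  have h1 : HasDerivAt (fun t => (c+1) * Real.cos t) ((c+1) * -Real.sin t₀) t₀ :=
    (Real.hasDerivAt_cos t₀).const_mul (c+1)
  have h2 : HasDerivAt (fun t => 2*c^2 / ((c+1) * Real.cos t))
      ((0 * ((c+1)*s) - 2*c^2 * ((c+1) * -Real.sin t₀)) / ((c+1)*s)^2) t₀ :=
    (hasDerivAt_const t₀ (2*c^2)).div h1 hden
  have hQpos : (0:ℝ) < 2*c^2/((c+1)*s) := by positivity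
  have h3 := h2.sqrt (ne_of_gt hQpos)
  convert h3 using 1
  -- value equality
  have hrs : (0:ℝ) < Real.sqrt s := Real.sqrt_pos.mpr hcos
  have hSQ : (0:ℝ) < Real.sqrt (2*c^2/((c+1)*s)) := Real.sqrt_pos.mpr hQpos
  have hmulself : Real.sqrt s * Real.sqrt s = s := Real.mul_self_sqrt hcos.le
  have hkey : Real.sqrt (2*c^2/((c+1)*s)) * Real.sqrt (c^2/(2*(c+1)))
      = c^2/((c+1) * Real.sqrt s) := by
    rw [← Real.sqrt_mul (by positivity)]
    have : 2*c^2/((c+1)*s) * (c^2/(2*(c+1))) = (c^2/((c+1) * Real.sqrt s))^2 := by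
      rw [div_pow, mul_pow]
      rw [show Real.sqrt s ^ 2 = s from by rw [sq, hmulself]]
      field_simp
    rw [this, Real.sqrt_sq (by positivity)]
  have hs32 : s ^ ((3:ℝ)/2) = s * Real.sqrt s := by
    rw [show ((3:ℝ)/2) = 1 + 1/2 by norm_num, Real.rpow_add hcos, Real.rpow_one,
      ← Real.sqrt_eq_rpow]
  rw [hs32, div_eq_div_iff (by positivity) (by positivity)]
  rw [show Real.sqrt (c^2/(2*(c+1))) * Real.sin t₀ * (2 * Real.sqrt (2*c^2/((c+1)*s)))
      = 2 * Real.sin t₀ * (Real.sqrt (2*c^2/((c+1)*s)) * Real.sqrt (c^2/(2*(c+1)))) by ring,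
    hkey]
  field_simp
  ring_nf
  rw [Real.sq_sqrt hcos.le]

private lemma scc_split (d : ℕ) (hd : 2 ≤ d) (f : ℕ → ℝ) :
    ∑ k ∈ Finset.range d, f k = f 0 + f 1 + ∑ k ∈ Finset.Ico 2 d, f k := by
  rw [Finset.range_eq_Ico, Finset.sum_eq_sum_Ico_succ_bot (by omega : 0 < d),
    Finset.sum_eq_sum_Ico_succ_bot (by omega : 1 < d)]
  ring

/-- In the static-cylinder Fefferman–Graham frame with
`h(w,t) = 1 − √w √(2c²/((c+1) cos t))`, the regulated volume
`Vol t ε = vol[S^{d−1}] ∫_ε^1 h(w,t)^{d−1} w^{−d} dw` of the extremal slice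
anchored at `t₀ ∈ (−π/2, π/2)` satisfies
`Vol t₀ ε = vol[S^{d−1}][ε^{−d+1}/(d−1) − ((d−1)/(d−3/2)) ε^{−d+3/2} g(t₀)] + O(ε^{−d+2})`,
and its time derivative is
`−ε^{−d+3/2} ((d−1)/(d−3/2)) vol[S^{d−1}] √(c²/(2(c+1))) sin t₀/(cos t₀)^{3/2} + O(ε^{−d+2})`,
which is negative for `0 < t₀ < π/2`. -/
theorem static_cylinder_complexity_decrease (d : ℕ) (hd : 2 ≤ d)
    (c volS : ℝ) (hc : 0 < c) (hvolS : 0 < volS)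
    (g : ℝ → ℝ) (hg : ∀ t : ℝ, g t = Real.sqrt (2 * c ^ 2 / ((c + 1) * Real.cos t)))
    (Vol : ℝ → ℝ → ℝ)
    (hVol : ∀ t ε : ℝ, Vol t ε =
      volS * ∫ w in ε..1, (1 - Real.sqrt w * g t) ^ (d - 1) * w ^ (-(d : ℝ)))
    (t₀ : ℝ) (ht₀ : t₀ ∈ Set.Ioo (-(π / 2)) (π / 2)) :
    ((fun ε : ℝ => Vol t₀ ε - volS * (ε ^ (-(d : ℝ) + 1) / ((d : ℝ) - 1)
        - ((d : ℝ) - 1) / ((d : ℝ) - 3 / 2) * ε ^ (-(d : ℝ) + 3 / 2) * g t₀))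
      =O[𝓝[>] 0] fun ε : ℝ => ε ^ (-(d : ℝ) + 2)) ∧
    ((fun ε : ℝ => deriv (fun t => Vol t ε) t₀
        + ε ^ (-(d : ℝ) + 3 / 2) * (((d : ℝ) - 1) / ((d : ℝ) - 3 / 2)) * volS *
          Real.sqrt (c ^ 2 / (2 * (c + 1))) * Real.sin t₀ / Real.cos t₀ ^ ((3 : ℝ) / 2))
      =O[𝓝[>] 0] fun ε : ℝ => ε ^ (-(d : ℝ) + 2)) ∧
    (0 < t₀ → 0 < Real.sin t₀ / Real.cos t₀ ^ ((3 : ℝ) / 2)) := by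
  obtain ⟨ht1, ht2⟩ := ht₀
  have hcos : 0 < Real.cos t₀ := Real.cos_pos_of_mem_Ioo ⟨ht1, ht2⟩
  have hD2 : (2:ℝ) ≤ (d:ℝ) := by exact_mod_cast hd
  have hD1 : (d:ℝ) - 1 ≠ 0 := by intro h; linarith
  have hD32 : (d:ℝ) - 3/2 ≠ 0 := by intro h; linarith
  have hcast : ((d-1 : ℕ) : ℝ) = (d:ℝ) - 1 := by
    have h1 : 1 ≤ d := by omega
    push_cast [h1]
    ring
  have e0 : ((0:ℕ):ℝ)/2 - (d:ℝ) + 1 = -(d:ℝ) + 1 := by push_cast; ring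
  have e1 : ((1:ℕ):ℝ)/2 - (d:ℝ) + 1 = -(d:ℝ) + 3/2 := by push_cast; ring
  set a := g t₀ with ha
  refine ⟨?_, ?_, ?_⟩
  · set m : ℕ → ℝ := fun k => ((d-1).choose k : ℝ) * (-a)^k / ((k:ℝ)/2 - (d:ℝ) + 1)
      with hm
    refine Filter.EventuallyEq.trans_isBigO ?_
      (scc_aux_O d hd (∑ k ∈ Finset.range d, m k) volS m)
    filter_upwards [Ioc_mem_nhdsGT (zero_lt_one)] with ε hε
    rw [hVol t₀ ε, scc_int_eval d hd a hε.1 hε.2]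
    have hT : ∀ k ∈ Finset.range d, ((d-1).choose k : ℝ) * (-a)^k *
        ((1 - ε ^ ((k:ℝ)/2 - (d:ℝ) + 1)) / ((k:ℝ)/2 - (d:ℝ) + 1))
        = m k - m k * ε ^ ((k:ℝ)/2 - (d:ℝ) + 1) := by
      intro k _; simp only [hm]; ring
    rw [Finset.sum_congr rfl hT, Finset.sum_sub_distrib,
      scc_split d hd (fun k => m k * ε ^ ((k:ℝ)/2 - (d:ℝ) + 1))]
    simp only [e0, e1]
    have hm0 : m 0 = 1/(-(d:ℝ)+1) := by
      simp only [hm, Nat.choose_zero_right, Nat.cast_one, pow_zero, Nat.cast_zero, one_mul]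
      rw [show ((0:ℝ))/2 - (d:ℝ) + 1 = -(d:ℝ) + 1 by ring]
    have hm1 : m 1 = ((d:ℝ)-1) * (-a) / (-(d:ℝ)+3/2) := by
      simp only [hm, Nat.choose_one_right, hcast, pow_one, Nat.cast_one]
      rw [show ((1:ℝ))/2 - (d:ℝ) + 1 = -(d:ℝ) + 3/2 by ring]
    rw [hm0, hm1]
    have h1 : -(d:ℝ) + 1 ≠ 0 := by intro h; linarith
    have h2 : -(d:ℝ) + 3/2 ≠ 0 := by intro h; linarith
    have h3 : -((d:ℝ)*2) + 3 ≠ 0 := by intro h; linarith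
    have h4 : (d:ℝ)*2 - 3 ≠ 0 := by intro h; linarith
    field_simp
    ring
  · have hgt : HasDerivAt g
        (Real.sqrt (c^2/(2*(c+1))) * Real.sin t₀ / Real.cos t₀ ^ ((3:ℝ)/2)) t₀ := by
      rw [show g = fun t => Real.sqrt (2 * c ^ 2 / ((c + 1) * Real.cos t)) from funext hg]
      exact scc_hasDerivAt_g c hc t₀ hcos
    set gd := Real.sqrt (c^2/(2*(c+1))) * Real.sin t₀ / Real.cos t₀ ^ ((3:ℝ)/2) with hgdd
    set m2 : ℕ → ℝ := fun k =>
        ((d-1).choose k : ℝ) * ((k:ℝ) * (-a)^(k-1) * -gd) / ((k:ℝ)/2 - (d:ℝ) + 1) with hm2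
    refine Filter.EventuallyEq.trans_isBigO ?_
      (scc_aux_O d hd (∑ k ∈ Finset.range d, m2 k) volS m2)
    filter_upwards [Ioc_mem_nhdsGT (zero_lt_one)] with ε hε
    have hfun : (fun t => Vol t ε) = fun t => volS * ∑ k ∈ Finset.range d,
        ((d-1).choose k : ℝ) * (-g t)^k *
          ((1 - ε ^ ((k:ℝ)/2 - (d:ℝ) + 1)) / ((k:ℝ)/2 - (d:ℝ) + 1)) := by
      funext t
      rw [hVol t ε, scc_int_eval d hd (g t) hε.1 hε.2]
    have hder : HasDerivAt (fun t => Vol t ε)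
        (volS * ∑ k ∈ Finset.range d, ((d-1).choose k : ℝ) *
          ((k:ℝ) * (-a)^(k-1) * -gd) *
          ((1 - ε ^ ((k:ℝ)/2 - (d:ℝ) + 1)) / ((k:ℝ)/2 - (d:ℝ) + 1))) t₀ := by
      rw [hfun]
      refine HasDerivAt.const_mul _ (HasDerivAt.fun_sum fun k _ => ?_)
      have h := ((hgt.fun_neg.fun_pow k).mul_const
        ((1 - ε ^ ((k:ℝ)/2 - (d:ℝ) + 1)) / ((k:ℝ)/2 - (d:ℝ) + 1))).const_mul
        (((d-1).choose k : ℝ))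
      convert h using 1
      · rfl
      · funext t; ring
      · rw [← ha]; ring
    rw [hder.deriv]
    have hT2 : ∀ k ∈ Finset.range d, ((d-1).choose k : ℝ) * ((k:ℝ) * (-a)^(k-1) * -gd) *
        ((1 - ε ^ ((k:ℝ)/2 - (d:ℝ) + 1)) / ((k:ℝ)/2 - (d:ℝ) + 1))
        = m2 k - m2 k * ε ^ ((k:ℝ)/2 - (d:ℝ) + 1) := by
      intro k _; simp only [hm2]; ring
    rw [Finset.sum_congr rfl hT2, Finset.sum_sub_distrib,
      scc_split d hd (fun k => m2 k * ε ^ ((k:ℝ)/2 - (d:ℝ) + 1))]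
    simp only [e0, e1]
    have hm20 : m2 0 = 0 := by
      simp [hm2]
    have hm21 : m2 1 = ((d:ℝ)-1) * -gd / (-(d:ℝ)+3/2) := by
      simp only [hm2, Nat.choose_one_right, hcast, pow_zero, Nat.cast_one, one_mul,
        Nat.sub_self]
      rw [show ((1:ℝ))/2 - (d:ℝ) + 1 = -(d:ℝ) + 3/2 by ring]
    rw [hm20, hm21]
    have hrepl : ε ^ (-(d:ℝ)+3/2) * (((d:ℝ)-1)/((d:ℝ)-3/2)) * volS *
        Real.sqrt (c^2/(2*(c+1))) * Real.sin t₀ / Real.cos t₀ ^ ((3:ℝ)/2)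
        = ε ^ (-(d:ℝ)+3/2) * (((d:ℝ)-1)/((d:ℝ)-3/2)) * volS * gd := by
      rw [hgdd]; ring
    rw [hrepl]
    have h1 : -(d:ℝ) + 1 ≠ 0 := by intro h; linarith
    have h2 : -(d:ℝ) + 3/2 ≠ 0 := by intro h; linarith
    have h3 : -((d:ℝ)*2) + 3 ≠ 0 := by intro h; linarith
    have h4 : (d:ℝ)*2 - 3 ≠ 0 := by intro h; linarith
    field_simp
    ring
  · intro ht
    have hsin : 0 < Real.sin t₀ := Real.sin_pos_of_pos_of_lt_pi ht
      (by nlinarith [Real.pi_pos])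
    exact div_pos hsin (Real.rpow_pos_of_pos hcos _)
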